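/- The space P₃ is homeomorphic to ℚ^ℕ. -/

import Mathlib

open TopologicalSpace Filter Set

/-- `𝒜_n(X) = {A ∈ 𝒦(X) : 1 ≤ |A'| ≤ n}` where `A'` is the derived set of `A` in `X`. -/
def An (X : Type*) [MetricSpace X] (n : ℕ) : Set (NonemptyCompacts X) :=
  {A | 1 ≤ (derivedSet (A : Set X)).ncard ∧ (derivedSet (A : Set X)).ncard ≤ n}

/-- `𝒜_n(X,F) = {A ∈ 𝒜_n(X) : A' ⊆ F}`. -/
def AnF (X : Type*) [MetricSpace X] (n : ℕ) (F : Set X) : Set (NonemptyCompacts X) :=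
  {A | A ∈ An X n ∧ derivedSet (A : Set X) ⊆ F}

/-- `𝒜_ω(X) = {A ∈ 𝒦(X) : A' is nonempty and finite}`. -/
def Aom (X : Type*) [MetricSpace X] : Set (NonemptyCompacts X) :=
  {A | (derivedSet (A : Set X)).Nonempty ∧ (derivedSet (A : Set X)).Finite}

/-- `𝒜_ω(X,F) = {A ∈ 𝒜_ω(X) : A' ⊆ F}`. -/
def AomF (X : Type*) [MetricSpace X] (F : Set X) : Set (NonemptyCompacts X) :=
  {A | A ∈ Aom X ∧ derivedSet (A : Set X) ⊆ F}

/-- `𝒜_{ω+1}(X) = {A ∈ 𝒦(X) : A' is nonempty and countable}`. -/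
def Aom1 (X : Type*) [MetricSpace X] : Set (NonemptyCompacts X) :=
  {A | (derivedSet (A : Set X)).Nonempty ∧ (derivedSet (A : Set X)).Countable}

/-- `ℋ(X) = {A ∈ 𝒦(X) : A countable}`. -/
def HH (X : Type*) [MetricSpace X] : Set (NonemptyCompacts X) :=
  {A | (A : Set X).Countable}

/-- F_σ set: a countable union of closed sets. -/
def IsFsigma {Y : Type*} [TopologicalSpace Y] (S : Set Y) : Prop :=
  ∃ f : ℕ → Set Y, (∀ i, IsClosed (f i)) ∧ S = ⋃ i, f i

/-- F_σδ set: a countable intersection of F_σ sets. -/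
def IsFsigmaDelta {Y : Type*} [TopologicalSpace Y] (S : Set Y) : Prop :=
  ∃ f : ℕ → Set Y, (∀ i, IsFsigma (f i)) ∧ S = ⋂ i, f i

/-- F_σδσ set: a countable union of F_σδ sets. -/
def IsFsigmaDeltaSigma {Y : Type*} [TopologicalSpace Y] (S : Set Y) : Prop :=
  ∃ f : ℕ → Set Y, (∀ i, IsFsigmaDelta (f i)) ∧ S = ⋃ i, f i

/-- G_δσ set: a countable union of G_δ sets. -/
def IsGdeltaSigma {Y : Type*} [TopologicalSpace Y] (S : Set Y) : Prop :=
  ∃ f : ℕ → Set Y, (∀ i, IsGδ (f i)) ∧ S = ⋃ i, f i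

/-- G_δσδ set: a countable intersection of G_δσ sets. -/
def IsGdeltaSigmaDelta {Y : Type*} [TopologicalSpace Y] (S : Set Y) : Prop :=
  ∃ f : ℕ → Set Y, (∀ i, IsGdeltaSigma (f i)) ∧ S = ⋂ i, f i

/-- A space is of the first category in itself if it is the union of countably many
subsets that are nowhere dense in it. -/
def FirstCategoryInItself (T : Type*) [TopologicalSpace T] : Prop :=
  ∃ f : ℕ → Set T, (∀ i, IsNowhereDense (f i)) ∧ (⋃ i, f i) = Set.univ

/-- A space is strongly homogeneous if any two nonempty clopen subsets are homeomorphic. -/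
def StronglyHomogeneous (T : Type*) [TopologicalSpace T] : Prop :=
  ∀ U V : Set T, IsClopen U → IsClopen V → U.Nonempty → V.Nonempty → Nonempty (↥U ≃ₜ ↥V)

/-- The standard set `P₃` in the Cantor cube `{0,1}^ℕ`. -/
def P3 : Set (ℕ → Bool) :=
  {x | ∀ n : ℕ, ∀ᶠ k in Filter.atTop, x (2 ^ n * (2 * k + 1)) = false}

/-- The standard set `S₄` in the Cantor cube `{0,1}^ℕ`. -/
def S4 : Set (ℕ → Bool) :=
  {x | ∀ᶠ n in Filter.atTop, ∀ᶠ k in Filter.atTop, x (2 ^ n * (2 * k + 1)) = false}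

/-- The standard set `Π₃` in the Hilbert cube `[0,1]^ℕ`. -/
def Pi3 : Set (ℕ → ↥unitInterval) :=
  {x | ∀ n : ℕ, ∀ᶠ m in Filter.atTop, x (2 ^ n * (2 * m + 1)) = 0}

/-- The standard set `Σ₄` in the Hilbert cube `[0,1]^ℕ`. -/
def Sigma4 : Set (ℕ → ↥unitInterval) :=
  {x | ∃ n₀ : ℕ, ∀ n ≥ n₀, ∀ᶠ m in Filter.atTop, x (2 ^ n * (2 * m + 1)) = 0}

/-- `c₀`: the space of real sequences converging to `0`, as a subspace of `ℝ^ℕ`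
with the product topology. -/
def c0 : Set (ℕ → ℝ) := {x | Filter.Tendsto x Filter.atTop (nhds 0)}

namespace P3Aux

/-- The set of eventually-false boolean sequences. -/
def Efun : Set (ℕ → Bool) := {y | ∀ᶠ k in Filter.atTop, y k = false}

/-- The space of eventually-false boolean sequences (a copy of the subtype, kept
semireducible so that stray subtype order instances do not apply). -/
def E : Type := {y : ℕ → Bool // y ∈ Efun}

instance : TopologicalSpace E :=
  inferInstanceAs (TopologicalSpace {y : ℕ → Bool // y ∈ Efun})

/-- Alternating comparison at coordinate `i`. -/
def cmpAt (i : ℕ) (a b : Bool) : Prop :=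
  if Even i then a = false ∧ b = true else a = true ∧ b = false

/-- Alternating lexicographic strict order on `E`. -/
def olt (x y : E) : Prop :=
  ∃ i, (∀ j < i, x.1 j = y.1 j) ∧ cmpAt i (x.1 i) (y.1 i)

lemma cmpAt_irrefl (i : ℕ) (a : Bool) : ¬ cmpAt i a a := by
  cases a <;> by_cases he : Even i <;> simp_all [cmpAt]

lemma cmpAt_cases {i : ℕ} {a b : Bool} (h : a ≠ b) : cmpAt i a b ∨ cmpAt i b a := by
  cases a <;> cases b <;> by_cases he : Even i <;> simp_all [cmpAt]

lemma cmpAt_not_both {i : ℕ} {a b c : Bool} (h1 : cmpAt i a b) (h2 : cmpAt i b c) : False := by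
  cases a <;> cases b <;> cases c <;> by_cases he : Even i <;> simp_all [cmpAt]

lemma olt_irrefl (x : E) : ¬ olt x x := by
  rintro ⟨i, -, hc⟩; exact cmpAt_irrefl i _ hc

lemma olt_trans {x y z : E} (h1 : olt x y) (h2 : olt y z) : olt x z := by
  obtain ⟨i, hi, ci⟩ := h1
  obtain ⟨j, hj, cj⟩ := h2
  rcases lt_trichotomy i j with h | h | h
  · exact ⟨i, fun l hl => (hi l hl).trans (hj l (hl.trans h)), by rwa [← hj i h]⟩
  · subst h; exact absurd ci (fun ci => cmpAt_not_both ci cj)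
  · exact ⟨j, fun l hl => (hi l (hl.trans h)).trans (hj l hl), by rwa [hi j h]⟩

lemma olt_total {x y : E} (h : x ≠ y) : olt x y ∨ olt y x := by
  have hne : ∃ i, x.1 i ≠ y.1 i := by
    by_contra hc
    push_neg at hc
    exact h (Subtype.ext (funext hc))
  classical
  have hi : x.1 (Nat.find hne) ≠ y.1 (Nat.find hne) := Nat.find_spec hne
  have hmin : ∀ j < Nat.find hne, x.1 j = y.1 j := fun j hj => by
    have := Nat.find_min hne hj; simpa using this
  rcases cmpAt_cases (i := Nat.find hne) hi with hc | hc
  · exact Or.inl ⟨Nat.find hne, hmin, hc⟩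
  · exact Or.inr ⟨Nat.find hne, fun j hj => (hmin j hj).symm, hc⟩

instance : IsStrictTotalOrder E olt where
  irrefl := olt_irrefl
  trans := fun _ _ _ => olt_trans
  trichotomous := fun x y => by
    intro h1 h2
    by_contra h
    rcases olt_total h with h' | h'
    · exact h1 h'
    · exact h2 h'

noncomputable instance : LinearOrder E :=
  @linearOrderOfSTO _ olt _ (Classical.decRel _)

lemma lt_iff_olt {x y : E} : x < y ↔ olt x y := Iff.rfl

instance : Countable E := by
  have : Efun.Countable := by
    have hsub : Efun ⊆ ⋃ n, {y : ℕ → Bool | ∀ k, n ≤ k → y k = false} := by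
      intro y hy
      obtain ⟨N, hN⟩ := Filter.eventually_atTop.1 hy
      exact Set.mem_iUnion.2 ⟨N, hN⟩
    refine Set.Countable.mono hsub (Set.countable_iUnion fun n => Set.Finite.countable ?_)
    have : {y : ℕ → Bool | ∀ k, n ≤ k → y k = false} ⊆
        Set.range (fun g : Fin n → Bool => fun k => if h : k < n then g ⟨k, h⟩ else false) := by
      intro y hy
      refine ⟨fun i => y i, funext fun k => ?_⟩
      by_cases h : k < n
      · simp [h]
      · simp [h, hy k (le_of_not_gt h)]
    exact Set.Finite.subset (Set.finite_range _) this
  exact this.to_subtype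

instance : Nonempty E := ⟨⟨fun _ => false, Filter.Eventually.of_forall fun _ => rfl⟩⟩

/-- Flip coordinate `m` of `x` to `true`. -/
noncomputable def eflip (x : E) (m : ℕ) : E :=
  ⟨Function.update x.1 m true, by
    obtain ⟨N, hN⟩ := Filter.eventually_atTop.1 x.2
    refine Filter.eventually_atTop.2 ⟨max N (m + 1), fun k hk => ?_⟩
    rw [Function.update_of_ne (by omega)]
    exact hN k (le_trans (le_max_left _ _) hk)⟩

lemma eflip_ne (x : E) {m j : ℕ} (h : j ≠ m) : (eflip x m).1 j = x.1 j :=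
  Function.update_of_ne h _ _

lemma eflip_self (x : E) (m : ℕ) : (eflip x m).1 m = true :=
  Function.update_self _ _ _

lemma exists_false_even (x : E) (n : ℕ) : ∃ m, n ≤ m ∧ Even m ∧ x.1 m = false := by
  obtain ⟨N, hN⟩ := Filter.eventually_atTop.1 x.2
  exact ⟨2 * (N + n), by omega, ⟨N + n, by ring⟩, hN _ (by omega)⟩

lemma exists_false_odd (x : E) (n : ℕ) : ∃ m, n ≤ m ∧ ¬ Even m ∧ x.1 m = false := by
  obtain ⟨N, hN⟩ := Filter.eventually_atTop.1 x.2
  refine ⟨2 * (N + n) + 1, by omega, ?_, hN _ (by omega)⟩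
  rw [Nat.even_iff]; omega

lemma lt_eflip {x : E} {m : ℕ} (hf : x.1 m = false) (he : Even m) : x < eflip x m := by
  refine lt_iff_olt.2 ⟨m, fun j hj => (eflip_ne x (by omega)).symm, ?_⟩
  rw [eflip_self]
  simp [cmpAt, he, hf]

lemma eflip_lt {x : E} {m : ℕ} (hf : x.1 m = false) (he : ¬ Even m) : eflip x m < x := by
  refine lt_iff_olt.2 ⟨m, fun j hj => eflip_ne x (by omega), ?_⟩
  rw [eflip_self]
  simp [cmpAt, he, hf]

/-- Key interval lemma: around any point there are `a < x < c` such that the whole open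
interval `(a, c)` agrees with `x` on coordinates `< n`. -/
lemma key (x : E) (n : ℕ) :
    ∃ a c : E, a < x ∧ x < c ∧
      ∀ z : E, a < z → z < c → ∀ j < n, z.1 j = x.1 j := by
  obtain ⟨m, hmn, hmo, hmf⟩ := exists_false_odd x n
  obtain ⟨m', hm'n, hm'e, hm'f⟩ := exists_false_even x n
  refine ⟨eflip x m, eflip x m', eflip_lt hmf hmo, lt_eflip hm'f hm'e, ?_⟩
  intro z haz hzc j
  induction j using Nat.strong_induction_on with
  | _ j IH =>
    intro hjn
    by_contra hne
    rcases cmpAt_cases (i := j) hne with hc | hc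
    · have : olt z (eflip x m) := by
        refine ⟨j, fun l hl => ?_, ?_⟩
        · rw [IH l hl (hl.trans hjn), eflip_ne x (by omega)]
        · rwa [eflip_ne x (by omega)]
      exact lt_asymm haz (lt_iff_olt.2 this)
    · have : olt (eflip x m') z := by
        refine ⟨j, fun l hl => ?_, ?_⟩
        · rw [eflip_ne x (by omega), IH l hl (hl.trans hjn)]
        · rwa [eflip_ne x (by omega)]
      exact lt_asymm hzc (lt_iff_olt.2 this)

instance : NoMaxOrder E := ⟨fun x => by
  obtain ⟨m, _, he, hf⟩ := exists_false_even x 0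
  exact ⟨eflip x m, lt_eflip hf he⟩⟩

instance : NoMinOrder E := ⟨fun x => by
  obtain ⟨m, _, ho, hf⟩ := exists_false_odd x 0
  exact ⟨eflip x m, eflip_lt hf ho⟩⟩

instance : DenselyOrdered E := ⟨fun x y hxy => by
  obtain ⟨i, hagree, hcmp⟩ := lt_iff_olt.1 hxy
  by_cases he : Even i
  · simp only [cmpAt, if_pos he] at hcmp
    obtain ⟨m, hmn, hme, hmf⟩ := exists_false_even x (i + 1)
    refine ⟨eflip x m, lt_eflip hmf hme, lt_iff_olt.2 ⟨i, fun j hj => ?_, ?_⟩⟩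
    · rw [eflip_ne x (by omega)]; exact hagree j hj
    · rw [eflip_ne x (by omega)]
      simp [cmpAt, he, hcmp.1, hcmp.2]
  · simp only [cmpAt, if_neg he] at hcmp
    obtain ⟨m, hmn, hmo, hmf⟩ := exists_false_odd y (i + 1)
    refine ⟨eflip y m, lt_iff_olt.2 ⟨i, fun j hj => ?_, ?_⟩, eflip_lt hmf hmo⟩
    · rw [eflip_ne y (by omega)]; exact hagree j hj
    · rw [eflip_ne y (by omega)]
      simp [cmpAt, he, hcmp.1, hcmp.2]⟩

/-- The subbasic rays of the order topology. -/
def rays : Set (Set E) := {s | ∃ a, s = Set.Ioi a ∨ s = Set.Iio a}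

lemma continuous_coord (j : ℕ) : Continuous (fun x : E => x.1 j) :=
  (continuous_apply j).comp (continuous_subtype_val :
    Continuous (Subtype.val : {y : ℕ → Bool // y ∈ Efun} → (ℕ → Bool)))

lemma coord_open (j : ℕ) (s : Set Bool) : IsOpen {x : E | x.1 j ∈ s} :=
  (continuous_coord j).isOpen_preimage s (isOpen_discrete s)

lemma rays_open : ∀ s ∈ rays, IsOpen s := by
  rintro s ⟨a, rfl | rfl⟩
  · have : Set.Ioi a = ⋃ i, ((⋂ j ∈ Finset.range i, {x : E | x.1 j = a.1 j}) ∩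
        {x : E | cmpAt i (a.1 i) (x.1 i)}) := by
      ext x
      simp only [Set.mem_Ioi, Set.mem_iUnion, Set.mem_inter_iff, Set.mem_iInter,
        Finset.mem_range, Set.mem_setOf_eq]
      constructor
      · rintro hx
        obtain ⟨i, h1, h2⟩ := lt_iff_olt.1 hx
        exact ⟨i, fun j hj => (h1 j hj).symm, h2⟩
      · rintro ⟨i, h1, h2⟩
        exact lt_iff_olt.2 ⟨i, fun j hj => (h1 j hj).symm, h2⟩
    rw [this]
    refine isOpen_iUnion fun i => IsOpen.inter ?_ ?_
    · exact isOpen_biInter_finset fun j _ => coord_open j {a.1 j}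
    · exact coord_open i {b | cmpAt i (a.1 i) b}
  · have : Set.Iio a = ⋃ i, ((⋂ j ∈ Finset.range i, {x : E | x.1 j = a.1 j}) ∩
        {x : E | cmpAt i (x.1 i) (a.1 i)}) := by
      ext x
      simp only [Set.mem_Iio, Set.mem_iUnion, Set.mem_inter_iff, Set.mem_iInter,
        Finset.mem_range, Set.mem_setOf_eq]
      constructor
      · rintro hx
        obtain ⟨i, h1, h2⟩ := lt_iff_olt.1 hx
        exact ⟨i, h1, h2⟩
      · rintro ⟨i, h1, h2⟩
        exact lt_iff_olt.2 ⟨i, h1, h2⟩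
    rw [this]
    refine isOpen_iUnion fun i => IsOpen.inter ?_ ?_
    · exact isOpen_biInter_finset fun j _ => coord_open j {a.1 j}
    · exact coord_open i {b | cmpAt i b (a.1 i)}

lemma coord_gen_open (j : ℕ) (b : Bool) :
    (TopologicalSpace.generateFrom rays).IsOpen {x : E | x.1 j = b} := by
  have hset : {x : E | x.1 j = b} = ⋃₀ {t : Set E |
      (∃ a c : E, t = Set.Ioi a ∩ Set.Iio c) ∧ t ⊆ {x : E | x.1 j = b}} := by
    apply Set.Subset.antisymm
    · intro x hx
      obtain ⟨a, c, hax, hxc, hprop⟩ := key x (j + 1)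
      refine ⟨Set.Ioi a ∩ Set.Iio c, ⟨⟨a, c, rfl⟩, ?_⟩, ⟨hax, hxc⟩⟩
      rintro z ⟨hz1, hz2⟩
      have := hprop z hz1 hz2 j (Nat.lt_succ_self j)
      simp only [Set.mem_setOf_eq] at hx ⊢
      rw [this, hx]
    · rintro x ⟨t, ⟨-, ht⟩, hxt⟩
      exact ht hxt
  rw [hset]
  apply TopologicalSpace.GenerateOpen.sUnion
  rintro t ⟨⟨a, c, rfl⟩, -⟩
  exact TopologicalSpace.GenerateOpen.inter _ _
    (TopologicalSpace.GenerateOpen.basic _ ⟨a, Or.inl rfl⟩)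
    (TopologicalSpace.GenerateOpen.basic _ ⟨c, Or.inr rfl⟩)

lemma coord_gen_open' (j : ℕ) (s : Set Bool) :
    (TopologicalSpace.generateFrom rays).IsOpen {x : E | x.1 j ∈ s} := by
  have hset : {x : E | x.1 j ∈ s} = ⋃ b ∈ s, {x : E | x.1 j = b} := by
    ext x; simp
  rw [hset]
  exact @isOpen_biUnion E Bool (TopologicalSpace.generateFrom rays) _ _
    (fun b _ => coord_gen_open j b)

lemma gen_le : TopologicalSpace.generateFrom rays ≤ (inferInstance : TopologicalSpace E) := by
  have h1 : (inferInstance : TopologicalSpace E) =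
      TopologicalSpace.induced (fun x : E => x.1) (Pi.topologicalSpace) := rfl
  rw [h1, pi_eq_generateFrom, induced_generateFrom_eq, le_generateFrom_iff_subset_isOpen]
  rintro s ⟨t, ⟨s', I, hs', rfl⟩, rfl⟩
  have hset : ((fun x : E => x.1) ⁻¹' Set.pi (↑I) s') = ⋂ j ∈ I, {x : E | x.1 j ∈ s' j} := by
    ext x; simp [Set.mem_pi]
  show (TopologicalSpace.generateFrom rays).IsOpen _
  rw [hset]
  exact @isOpen_biInter_finset E ℕ (TopologicalSpace.generateFrom rays) I _
    (fun j _ => coord_gen_open' j (s' j))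

instance : OrderTopology E :=
  ⟨le_antisymm (le_generateFrom rays_open) gen_le⟩

/-- `E` is homeomorphic to `ℚ`. -/
noncomputable def eRat : E ≃ₜ ℚ :=
  (Order.iso_of_countable_dense (α := E) (β := ℚ)).some.toHomeomorph

/-! ### The pairing function `(n, k) ↦ 2^n (2k+1)` with the shift at column `0`. -/

def u' : ℕ → ℕ × ℕ
  | 0 => (0, 0)
  | (m + 1) =>
    if (m + 1) % 2 = 1 then (0, m / 2)
    else ((u' ((m + 1) / 2)).1 + 1, (u' ((m + 1) / 2)).2)
  decreasing_by exact Nat.div_lt_self (Nat.succ_pos m) one_lt_two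

lemma u'_odd (k : ℕ) : u' (2 * k + 1) = (0, k) := by
  rw [show 2 * k + 1 = (2 * k) + 1 from rfl, u']
  rw [if_pos (by omega)]
  congr 1
  omega

lemma u'_two_mul (m : ℕ) (hm : 1 ≤ m) : u' (2 * m) = ((u' m).1 + 1, (u' m).2) := by
  obtain ⟨m', rfl⟩ : ∃ m', m = m' + 1 := ⟨m - 1, by omega⟩
  rw [show 2 * (m' + 1) = (2 * m' + 1) + 1 by ring, u']
  rw [if_neg (by omega)]
  have h2 : (2 * m' + 1 + 1) / 2 = m' + 1 := by omega
  rw [h2]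

lemma pow_mul_ne_zero (n k : ℕ) : 2 ^ n * (2 * k + 1) ≠ 0 :=
  Nat.mul_ne_zero (pow_ne_zero n two_ne_zero) (by omega)

lemma u'_pow_mul (n k : ℕ) : u' (2 ^ n * (2 * k + 1)) = (n, k) := by
  induction n with
  | zero => simpa using u'_odd k
  | succ n ih =>
    rw [show 2 ^ (n + 1) * (2 * k + 1) = 2 * (2 ^ n * (2 * k + 1)) by ring,
      u'_two_mul _ (Nat.one_le_iff_ne_zero.2 (pow_mul_ne_zero _ _)), ih]

lemma u'_spec : ∀ m, 1 ≤ m → 2 ^ (u' m).1 * (2 * (u' m).2 + 1) = m := by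
  intro m
  induction m using Nat.strong_induction_on with
  | _ m IH =>
    intro hm
    rcases Nat.even_or_odd m with he | ho
    · obtain ⟨r, rfl⟩ := he
      rw [show r + r = 2 * r by ring] at hm IH ⊢
      set m' := r with hm'def
      have hm' : 1 ≤ m' := by omega
      rw [u'_two_mul m' hm']
      have hr := IH m' (by omega) hm'
      calc 2 ^ ((u' m').1 + 1) * (2 * (u' m').2 + 1)
          = 2 * (2 ^ (u' m').1 * (2 * (u' m').2 + 1)) := by ring
        _ = 2 * m' := by rw [hr]
    · obtain ⟨k, rfl⟩ := ho
      rw [u'_odd]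
      simp

def pairF : ℕ → ℕ → ℕ
  | 0, 0 => 0
  | 0, k + 1 => 2 * k + 1
  | n + 1, k => 2 ^ (n + 1) * (2 * k + 1)

def unpairF (m : ℕ) : ℕ × ℕ :=
  if m = 0 then (0, 0)
  else if (u' m).1 = 0 then (0, (u' m).2 + 1) else u' m

lemma unpair_pair (n k : ℕ) : unpairF (pairF n k) = (n, k) := by
  match n, k with
  | 0, 0 => rfl
  | 0, k + 1 =>
    show unpairF (2 * k + 1) = (0, k + 1)
    rw [unpairF, if_neg (by omega)]
    rw [show 2 * k + 1 = 2 ^ 0 * (2 * k + 1) by ring, u'_pow_mul]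
    simp
  | n + 1, k =>
    show unpairF (2 ^ (n + 1) * (2 * k + 1)) = (n + 1, k)
    rw [unpairF, if_neg (pow_mul_ne_zero _ _), u'_pow_mul]
    simp

lemma pair_unpair (m : ℕ) : pairF (unpairF m).1 (unpairF m).2 = m := by
  rcases Nat.eq_zero_or_pos m with rfl | hm
  · rfl
  · have hspec := u'_spec m hm
    rw [unpairF, if_neg (by omega)]
    rcases hn : (u' m).1 with _ | n
    · rw [if_pos rfl]
      show 2 * (u' m).2 + 1 = m
      rw [hn] at hspec
      simpa using hspec
    · rw [if_neg (by omega)]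
      show pairF (u' m).1 (u' m).2 = m
      rw [hn]
      show 2 ^ (n + 1) * (2 * (u' m).2 + 1) = m
      rw [← hn]
      exact hspec

/-! ### The homeomorphism `P3 ≃ₜ (ℕ → E)`. -/

lemma col_mem (x : ↥P3) (n : ℕ) : (fun k => x.1 (pairF n k)) ∈ Efun := by
  match n with
  | 0 =>
    obtain ⟨N, hN⟩ := Filter.eventually_atTop.1 (x.2 0)
    refine Filter.eventually_atTop.2 ⟨N + 1, fun k hk => ?_⟩
    obtain ⟨k', rfl⟩ : ∃ k', k = k' + 1 := ⟨k - 1, by omega⟩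
    show x.1 (2 * k' + 1) = false
    have := hN k' (by omega)
    simpa using this
  | n + 1 =>
    exact x.2 (n + 1)

lemma glue_mem (f : ℕ → E) :
    (fun m => (f (unpairF m).1).1 (unpairF m).2) ∈ P3 := by
  intro n
  match n with
  | 0 =>
    obtain ⟨N, hN⟩ := Filter.eventually_atTop.1 (f 0).2
    refine Filter.eventually_atTop.2 ⟨N, fun k hk => ?_⟩
    have hu : unpairF (2 ^ 0 * (2 * k + 1)) = (0, k + 1) := by
      rw [unpairF, if_neg (pow_mul_ne_zero _ _), u'_pow_mul]
      simp
    show (f (unpairF (2 ^ 0 * (2 * k + 1))).1).1 (unpairF (2 ^ 0 * (2 * k + 1))).2 = false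
    rw [hu]
    exact hN (k + 1) (by omega)
  | n + 1 =>
    obtain ⟨N, hN⟩ := Filter.eventually_atTop.1 (f (n + 1)).2
    refine Filter.eventually_atTop.2 ⟨N, fun k hk => ?_⟩
    have hu : unpairF (2 ^ (n + 1) * (2 * k + 1)) = (n + 1, k) := by
      rw [unpairF, if_neg (pow_mul_ne_zero _ _), u'_pow_mul]
      simp
    show (f (unpairF (2 ^ (n + 1) * (2 * k + 1))).1).1 (unpairF (2 ^ (n + 1) * (2 * k + 1))).2
        = false
    rw [hu]
    exact hN k hk

/-- The coordinate-shuffling homeomorphism `P3 ≃ₜ (ℕ → E)`. -/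
def P3homeo : ↥P3 ≃ₜ (ℕ → E) where
  toFun x := fun n => ⟨fun k => x.1 (pairF n k), col_mem x n⟩
  invFun f := ⟨fun m => (f (unpairF m).1).1 (unpairF m).2, glue_mem f⟩
  left_inv x := by
    apply Subtype.ext
    funext m
    show x.1 (pairF (unpairF m).1 (unpairF m).2) = x.1 m
    rw [pair_unpair]
  right_inv f := by
    funext n
    apply Subtype.ext
    funext k
    show (f (unpairF (pairF n k)).1).1 (unpairF (pairF n k)).2 = (f n).1 k
    rw [unpair_pair]
  continuous_toFun := by
    refine continuous_pi fun n => ?_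
    refine Continuous.subtype_mk ?_ _
    exact continuous_pi fun k => (continuous_apply (pairF n k)).comp continuous_subtype_val
  continuous_invFun := by
    refine Continuous.subtype_mk ?_ _
    refine continuous_pi fun m => ?_
    exact (continuous_apply (unpairF m).2).comp
      ((continuous_subtype_val :
          Continuous (Subtype.val : {y : ℕ → Bool // y ∈ Efun} → (ℕ → Bool))).comp
        (continuous_apply (unpairF m).1))

end P3Aux


theorem statement15 : Nonempty (↥P3 ≃ₜ (ℕ → ℚ)) :=
  ⟨P3Aux.P3homeo.trans (Homeomorph.piCongrRight fun _ => P3Aux.eRat)⟩
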